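/- Let T̂ ∈ Ĝ and λ ∈ ℂ satisfy T̂(e,0) = λ·(e,0). Then λ ≠ 0, and setting μ = 1/conj(λ), there exist a unitary operator U of the orthogonal complement (ℂ·e)^⊥ in H, a' ∈ H orthogonal to e, and s ∈ ℂ with Re s = (1/2)‖a'‖², such that T̂(x,z) = ((λ·⟨x,e⟩ + ⟨x', U⁻¹(a')⟩ + μ·s·z)·e + U(x') + μ·z·a', μ·z) for all (x,z) ∈ H ⊕ ℂ. -/

import Mathlib

noncomputable section

variable {H : Type*} [NormedAddCommGroup H] [InnerProductSpace ℂ H] [CompleteSpace H]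

/-- The Hermitian form `Â((x,z),(y,w)) = -z·conj⟨y,e⟩ - ⟨x,e⟩·conj w + ⟨x',y'⟩`
(paper convention: linear in the first argument, with `⟨a,b⟩ = inner b a` in Mathlib,
and `x' = x - ⟨x,e⟩e`). -/
def hatA (e : H) (u v : H × ℂ) : ℂ :=
  - u.2 * (inner ℂ v.1 e : ℂ) - (inner ℂ e u.1 : ℂ) * (starRingEnd ℂ) v.2
    + (inner ℂ (v.1 - (inner ℂ e v.1 : ℂ) • e) (u.1 - (inner ℂ e u.1 : ℂ) • e) : ℂ)

/-- Membership in the group `Ĝ` of bounded bijective linear maps preserving `Â`. -/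
def memGhat (e : H) (T : (H × ℂ) →L[ℂ] (H × ℂ)) : Prop :=
  Function.Bijective T ∧ ∀ u v : H × ℂ, hatA e (T u) (T v) = hatA e u v

/-- `T` is the Heisenberg translation `(λ, a', s)`: an element of `Ĝ` sending
`(x,z)` to `λ·((⟨x,e⟩ + ⟨x',a'⟩ + s·z)·e + x' + z·a', z)`, where `|λ| = 1`,
`a' ⊥ e`, `s ≠ 0` and `Re s = ‖a'‖²/2`. -/
def IsHeisenberg (e : H) (T : (H × ℂ) →L[ℂ] (H × ℂ)) (lam : ℂ) (a' : H) (s : ℂ) :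
    Prop :=
  ‖lam‖ = 1 ∧ a' ∈ (ℂ ∙ e)ᗮ ∧ s ≠ 0 ∧ s.re = (1 / 2) * ‖a'‖ ^ 2 ∧
  memGhat e T ∧
  ∀ (x : H) (z : ℂ),
    T (x, z) = lam •
      (((((inner ℂ e x : ℂ) + (inner ℂ a' (x - (inner ℂ e x : ℂ) • e) : ℂ) + s * z) • e
          + (x - (inner ℂ e x : ℂ) • e) + z • a', z)) : H × ℂ)

/-- `K†`, the `Â`-orthogonal complement of a subspace `K` of `H ⊕ ℂ`. -/
def daggerHat (e : H) (K : Submodule ℂ (H × ℂ)) : Submodule ℂ (H × ℂ) where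
  carrier := {v | ∀ m ∈ K, hatA e v m = 0}
  add_mem' := by
    intro a b ha hb m hm
    have h1 := ha m hm
    have h2 := hb m hm
    simp only [hatA, Prod.fst_add, Prod.snd_add, inner_add_right, inner_sub_right,
      inner_smul_right, add_smul] at *
    ring_nf at *
    linear_combination h1 + h2
  zero_mem' := by
    intro m hm
    simp [hatA]
  smul_mem' := by
    intro c a ha m hm
    have h1 := ha m hm
    simp only [hatA, Prod.smul_fst, Prod.smul_snd, inner_smul_right, inner_sub_right,
      smul_eq_mul, smul_smul] at *
    ring_nf at *
    linear_combination c * h1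

end

section
variable {H : Type*} [NormedAddCommGroup H] [InnerProductSpace ℂ H] [CompleteSpace H]

/-- The component `x' = x - ⟨x,e⟩e` of `x`, as an element of `(ℂ·e)ᗮ`. -/
noncomputable def projPerp (e : H) (he : ‖e‖ = 1) (x : H) : ((ℂ ∙ e)ᗮ : Submodule ℂ H) :=
  ⟨x - (inner ℂ e x : ℂ) • e, by
    rw [Submodule.mem_orthogonal]
    intro u hu
    rcases Submodule.mem_span_singleton.1 hu with ⟨c, rfl⟩
    have h1 : (inner ℂ e e : ℂ) = 1 := by
      rw [inner_self_eq_norm_sq_to_K, he]; norm_num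
    simp [inner_smul_left, inner_sub_right, inner_smul_right, h1]
    rw [he]; simp; ring⟩


noncomputable def perpCLM (e : H) (he : ‖e‖ = 1) : H →L[ℂ] ((ℂ ∙ e)ᗮ : Submodule ℂ H) :=
  (ContinuousLinearMap.id ℂ H - (innerSL ℂ e).smulRight e).codRestrict _
    (fun x => by
      simp only [ContinuousLinearMap.sub_apply, ContinuousLinearMap.coe_id', id_eq,
        ContinuousLinearMap.smulRight_apply, innerSL_apply_apply]
      exact (projPerp e he x).2)

lemma perpCLM_coe (e : H) (he : ‖e‖ = 1) (x : H) :
    ((perpCLM e he x : H)) = x - (inner ℂ e x : ℂ) • e := by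
  simp [perpCLM]

noncomputable def Umap (e : H) (he : ‖e‖ = 1) (T : (H × ℂ) →L[ℂ] (H × ℂ)) :
    ((ℂ ∙ e)ᗮ : Submodule ℂ H) →L[ℂ] ((ℂ ∙ e)ᗮ : Submodule ℂ H) :=
  (perpCLM e he).comp (((ContinuousLinearMap.fst ℂ H ℂ).comp
    (T.comp (ContinuousLinearMap.inl ℂ H ℂ))).comp (Submodule.subtypeL _))

lemma Umap_coe (e : H) (he : ‖e‖ = 1) (T : (H × ℂ) →L[ℂ] (H × ℂ))
    (v : ((ℂ ∙ e)ᗮ : Submodule ℂ H)) :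
    ((Umap e he T v : H)) = (T ((v : H), 0)).1 - (inner ℂ e (T ((v : H), 0)).1 : ℂ) • e := by
  simp [Umap, perpCLM_coe]

lemma hatA_expand (e : H) (hee : (inner ℂ e e : ℂ) = 1) (u v : H × ℂ) :
    hatA e u v = - u.2 * (inner ℂ v.1 e : ℂ) - (inner ℂ e u.1 : ℂ) * (starRingEnd ℂ) v.2
      + (inner ℂ v.1 u.1 : ℂ) - (inner ℂ e u.1 : ℂ) * (inner ℂ v.1 e : ℂ) := by
  have h : (inner ℂ v.1 e : ℂ) = (starRingEnd ℂ) (inner ℂ e v.1 : ℂ) := by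
    rw [← inner_conj_symm]
  simp only [hatA, inner_sub_left, inner_sub_right, inner_smul_left, inner_smul_right, hee, h]
  ring

/-- the general form of an element of the stabilizer of `∞` in `Ĝ`:
if `T̂(e,0) = λ·(e,0)` then, with `μ = 1/conj λ`, `T̂` is given by a unitary `U` of
`(ℂ·e)ᗮ`, a vector `a' ⊥ e` and `s ∈ ℂ` with `Re s = ‖a'‖²/2`. -/
theorem stabilizer_infinity_form
    (e : H) (he : ‖e‖ = 1)
    (T : (H × ℂ) →L[ℂ] (H × ℂ)) (hT : memGhat e T)
    (lam : ℂ) (hfix : T ((e, 0) : H × ℂ) = lam • ((e, 0) : H × ℂ)) :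
    lam ≠ 0 ∧
    ∃ (U : ((ℂ ∙ e)ᗮ : Submodule ℂ H) →L[ℂ] ((ℂ ∙ e)ᗮ : Submodule ℂ H))
      (a' : ((ℂ ∙ e)ᗮ : Submodule ℂ H)) (c' : ((ℂ ∙ e)ᗮ : Submodule ℂ H)) (s : ℂ),
      -- U is a unitary operator of (ℂ·e)ᗮ
      Function.Bijective U ∧
      (∀ u v : ((ℂ ∙ e)ᗮ : Submodule ℂ H), (inner ℂ (U u) (U v) : ℂ) = inner ℂ u v) ∧
      -- Re s = ‖a'‖²/2
      s.re = (1 / 2) * ‖(a' : H)‖ ^ 2 ∧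
      -- c' = U⁻¹(a')
      U c' = a' ∧
      -- form of T̂, with μ = 1/conj λ
      (∀ (x : H) (z : ℂ),
        T (x, z) =
          (((lam * (inner ℂ e x : ℂ)
              + (inner ℂ (c' : H) (x - (inner ℂ e x : ℂ) • e) : ℂ)
              + (1 / (starRingEnd ℂ) lam) * s * z) • e
            + ((U (projPerp e he x) : H))
            + ((1 / (starRingEnd ℂ) lam) * z) • (a' : H),
            (1 / (starRingEnd ℂ) lam) * z) : H × ℂ)) := by
  obtain ⟨hbij, hpres⟩ := hT
  have hee : (inner ℂ e e : ℂ) = 1 := by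
    rw [inner_self_eq_norm_sq_to_K, he]; norm_num
  have hlam : lam ≠ 0 := by
    intro h
    have h0 : T ((e,0) : H × ℂ) = T 0 := by simp [hfix, h]
    have he0 : ((e,0) : H × ℂ) = (0 : H × ℂ) := hbij.1 (by simpa using h0)
    have he' : e = (0:H) := congrArg Prod.fst he0
    rw [he'] at he; simp at he
  have hlamc : (starRingEnd ℂ) lam ≠ 0 := by simpa using hlam
  -- second components
  have hsnd : ∀ u : H × ℂ, (T u).2 = (1 / (starRingEnd ℂ) lam) * u.2 := by
    intro u
    have h := hpres u ((e,0) : H × ℂ)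
    rw [hfix, hatA_expand e hee, hatA_expand e hee] at h
    simp only [inner_smul_left, inner_smul_right, hee, Prod.smul_fst, Prod.smul_snd,
      smul_eq_mul, mul_zero, mul_one, map_zero, smul_zero] at h
    field_simp
    linear_combination -h
  -- abbreviations
  have hmulA : (1 / (starRingEnd ℂ) lam) * (starRingEnd ℂ) lam = 1 := by
    field_simp
  have hmulB : (starRingEnd ℂ) (1 / (starRingEnd ℂ) lam) * lam = 1 := by
    simp only [map_div₀, map_one, RingHomCompTriple.comp_apply, RingHom.id_apply]
    field_simp
  have hT01 : T ((0:H),(1:ℂ)) = ((T ((0:H),(1:ℂ))).1, 1 / (starRingEnd ℂ) lam) := by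
    exact Prod.ext rfl (by simpa using hsnd ((0:H),(1:ℂ)))
  set μ : ℂ := 1 / (starRingEnd ℂ) lam with hμdef
  set b : H := (T ((0:H), (1:ℂ))).1 with hbdef
  have hTx0 : ∀ x : H, T ((x,0) : H × ℂ) = ((T ((x,0):H × ℂ)).1, 0) := fun x =>
    Prod.ext rfl (by simpa using hsnd (x,0))
  -- the quadratic relation for b
  have hquad : - μ * (inner ℂ b e : ℂ) - (inner ℂ e b : ℂ) * (starRingEnd ℂ) μ
      + (inner ℂ b b : ℂ) - (inner ℂ e b : ℂ) * (inner ℂ b e : ℂ) = 0 := by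
    have h := hpres ((0:H),(1:ℂ)) ((0:H),(1:ℂ))
    rw [hT01, hatA_expand e hee, hatA_expand e hee] at h
    simp only [inner_zero_left, inner_zero_right, map_one, mul_zero, mul_one, zero_mul,
      neg_zero, sub_zero, add_zero, zero_sub, zero_add, neg_mul, one_mul] at h
    linear_combination h
  -- the phi relation
  have hphi : ∀ x : H, (inner ℂ e (T ((x,0):H × ℂ)).1 : ℂ) * (starRingEnd ℂ) μ
      = (inner ℂ e x : ℂ) + (inner ℂ b (T ((x,0):H × ℂ)).1 : ℂ)
        - (inner ℂ e (T ((x,0):H × ℂ)).1 : ℂ) * (inner ℂ b e : ℂ) := by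
    intro x
    have h := hpres ((x,0):H × ℂ) ((0:H),(1:ℂ))
    rw [hT01, hTx0 x, hatA_expand e hee, hatA_expand e hee] at h
    simp only [inner_zero_left, inner_zero_right, map_one, mul_zero, mul_one, zero_mul,
      neg_zero, sub_zero, add_zero, zero_sub, zero_add, neg_mul, one_mul] at h
    linear_combination -h
  -- inner ℂ product preservation
  have hFF : ∀ x y : H, (inner ℂ (T ((y,0):H × ℂ)).1 (T ((x,0):H × ℂ)).1 : ℂ)
      - (inner ℂ e (T ((x,0):H × ℂ)).1 : ℂ) * (inner ℂ (T ((y,0):H × ℂ)).1 e : ℂ)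
      = (inner ℂ y x : ℂ) - (inner ℂ e x : ℂ) * (inner ℂ y e : ℂ) := by
    intro x y
    have h := hpres ((x,0):H × ℂ) ((y,0):H × ℂ)
    rw [hTx0 x, hTx0 y, hatA_expand e hee, hatA_expand e hee] at h
    simp only [map_zero, mul_zero, zero_mul, neg_zero, sub_zero, add_zero, zero_sub,
      zero_add, neg_mul] at h
    linear_combination h
  -- linearity facts
  have hFe : (T ((e,0):H × ℂ)).1 = lam • e := by rw [hfix]; simp
  have hadd : ∀ (x : H) (z : ℂ), T ((x,z):H × ℂ) = T ((x,0):H × ℂ) + z • T ((0:H),(1:ℂ)) := by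
    intro x z
    have h : ((x,z) : H × ℂ) = (x,0) + z • ((0:H),(1:ℂ)) := by
      simp [Prod.ext_iff]
    rw [h, map_add, map_smul]
  have hFsub : ∀ x : H, (T ((x - (inner ℂ e x : ℂ) • e, 0) : H × ℂ)).1
      = (T ((x,0):H × ℂ)).1 - ((inner ℂ e x : ℂ) * lam) • e := by
    intro x
    have h : ((x - (inner ℂ e x : ℂ) • e, 0) : H × ℂ) = (x,0) - (inner ℂ e x : ℂ) • ((e,0):H × ℂ) := by
      simp [Prod.ext_iff]
    rw [h, map_sub, map_smul, hfix]
    simp [smul_smul]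
  have hprojcoe : ∀ x : H, ((projPerp e he x : H)) = x - (inner ℂ e x : ℂ) • e := fun x => rfl
  have hUval : ∀ x : H, ((Umap e he T (projPerp e he x) : H))
      = (T ((x,0):H × ℂ)).1 - (inner ℂ e (T ((x,0):H × ℂ)).1 : ℂ) • e := by
    intro x
    rw [Umap_coe, hprojcoe, hFsub x]
    simp only [inner_sub_right, inner_smul_right, hee, mul_one]
    module
  have hinner_e : ∀ u : ((ℂ ∙ e)ᗮ : Submodule ℂ H), (inner ℂ e (u:H) : ℂ) = 0 := fun u =>
    u.2 e (Submodule.mem_span_singleton_self e)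
  have hproj_id : ∀ u : ((ℂ ∙ e)ᗮ : Submodule ℂ H), projPerp e he (u:H) = u := by
    intro u
    apply Subtype.ext
    rw [hprojcoe, hinner_e]
    simp
  have hconj : ∀ a c : H, (inner ℂ a c : ℂ) = (starRingEnd ℂ) (inner ℂ c a : ℂ) := fun a c =>
    (inner_conj_symm a c).symm
  -- U preserves inner ℂ products
  have hUinner : ∀ u v : ((ℂ ∙ e)ᗮ : Submodule ℂ H),
      (inner ℂ (Umap e he T u) (Umap e he T v) : ℂ) = inner ℂ u v := by
    intro u v
    have h1 : (inner ℂ (Umap e he T u) (Umap e he T v) : ℂ)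
        = (inner ℂ ((Umap e he T u : H)) ((Umap e he T v : H)) : ℂ) := rfl
    have h2 : (inner ℂ u v : ℂ) = (inner ℂ (u:H) (v:H) : ℂ) := rfl
    rw [h1, h2, ← hproj_id u, ← hproj_id v, hUval, hUval, hproj_id u, hproj_id v]
    have h := hFF (v:H) (u:H)
    rw [hinner_e v, hconj (u:H) e, hinner_e u] at h
    simp only [map_zero, mul_zero, sub_zero, zero_mul] at h
    simp only [inner_sub_left, inner_sub_right, inner_smul_left, inner_smul_right, hee, mul_one]
    linear_combination h
  -- U is surjective
  have hUsurj : ∀ w : ((ℂ ∙ e)ᗮ : Submodule ℂ H), ∃ v, Umap e he T v = w := by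
    intro w
    obtain ⟨u, hu⟩ := hbij.2 (((w:H), 0) : H × ℂ)
    have hu2 : u.2 = 0 := by
      have h0 := hsnd u
      rw [hu] at h0
      have h : μ * u.2 = 0 := by simpa using h0.symm
      rcases mul_eq_zero.mp h with h' | h'
      · exact absurd h' (one_div_ne_zero hlamc)
      · exact h' 
    have hu' : u = ((u.1, 0) : H × ℂ) := by rw [← hu2]
    refine ⟨projPerp e he u.1, ?_⟩
    apply Subtype.ext
    rw [hUval u.1, ← hu', hu]
    simp [hinner_e w]
  -- U is injective
  have hUinj : Function.Injective (Umap e he T) := by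
    intro u v huv
    have h := hUinner (u - v) (u - v)
    rw [map_sub, huv, sub_self] at h
    simp only [inner_zero_left] at h
    exact sub_eq_zero.mp (inner_self_eq_zero.mp h.symm)
  -- define a', c', s
  set a' : ((ℂ ∙ e)ᗮ : Submodule ℂ H) := (starRingEnd ℂ) lam • projPerp e he b with ha'def
  obtain ⟨c', hc'⟩ := hUsurj a'
  set s : ℂ := (starRingEnd ℂ) lam * (inner ℂ e b : ℂ) with hsdef
  have ha'coe : ((a' : H)) = (starRingEnd ℂ) lam • (b - (inner ℂ e b : ℂ) • e) := rfl
  -- the real-part condition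
  have hinner_a : (inner ℂ (a':H) (a':H) : ℂ)
      = lam * (starRingEnd ℂ) lam * ((inner ℂ b b : ℂ) - (inner ℂ e b : ℂ) * (inner ℂ b e : ℂ)) := by
    rw [ha'coe]
    simp only [inner_smul_left, inner_smul_right, inner_sub_left, inner_sub_right,
      inner_smul_left, inner_smul_right, hee, mul_one, Complex.conj_conj]
    rw [← hconj b e]
    ring
  have hkey : s + (starRingEnd ℂ) s = (inner ℂ (a':H) (a':H) : ℂ) := by
    rw [hinner_a, hsdef]
    simp only [map_mul, Complex.conj_conj]
    rw [← hconj b e]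
    linear_combination (-(lam * (starRingEnd ℂ) lam)) * hquad
      + (-(lam * (inner ℂ b e : ℂ))) * hmulA + (-((starRingEnd ℂ) lam * (inner ℂ e b : ℂ))) * hmulB
  have hs_re : s.re = (1/2) * ‖(a' : H)‖^2 := by
    have h1 : (inner ℂ (a':H) (a':H) : ℂ) = ((‖(a':H)‖^2 : ℝ) : ℂ) := by
      rw [inner_self_eq_norm_sq_to_K]
      norm_cast
    rw [h1, Complex.add_conj] at hkey
    have := Complex.ofReal_inj.mp hkey
    linarith
  -- the key identity for the e-component
  have hkey2 : ∀ x : H, (inner ℂ e (T ((x,0):H × ℂ)).1 : ℂ)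
      = lam * (inner ℂ e x : ℂ) + (inner ℂ (c':H) (x - (inner ℂ e x : ℂ) • e) : ℂ) := by
    intro x
    have hp := hphi x
    have h1 : (inner ℂ (c':H) (x - (inner ℂ e x : ℂ) • e) : ℂ)
        = lam * ((inner ℂ b (T ((x,0):H × ℂ)).1 : ℂ)
            - (inner ℂ e (T ((x,0):H × ℂ)).1 : ℂ) * (inner ℂ b e : ℂ)) := by
      have h2 : (inner ℂ (c':H) (x - (inner ℂ e x : ℂ) • e) : ℂ)
          = (inner ℂ c' (projPerp e he x) : ℂ) := rfl
      rw [h2, ← hUinner c' (projPerp e he x), hc']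
      have h3 : (inner ℂ a' ((Umap e he T) (projPerp e he x)) : ℂ)
          = (inner ℂ (a':H) (((Umap e he T) (projPerp e he x) : H)) : ℂ) := rfl
      rw [h3, ha'coe, hUval x]
      simp only [inner_smul_left, inner_smul_right, inner_sub_left, inner_sub_right,
        hee, mul_one, Complex.conj_conj]
      rw [← hconj b e]
      ring
    rw [h1]
    linear_combination lam * hp - ((inner ℂ e (T ((x,0):H × ℂ)).1 : ℂ)) * hmulB
  -- assemble
  refine ⟨hlam, Umap e he T, a', c', s, ⟨hUinj, hUsurj⟩, hUinner, hs_re, hc', ?_⟩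
  intro x z
  rw [hadd x z, hT01]
  refine Prod.ext ?_ ?_
  · simp only [Prod.fst_add, Prod.smul_fst, smul_eq_mul]
    rw [← hkey2 x, hUval x, ha'coe]
    match_scalars
    all_goals simp only [hμdef, hsdef]
    all_goals field_simp
    all_goals ring
  · simp only [Prod.snd_add, Prod.smul_snd, smul_eq_mul]
    rw [hTx0 x]
    ring

end
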